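/- With the setup of the previous statement, for any w = Σ f_i ⊗ g_i with Σ f_i [D₂, g_i] = 0 (a universal one-form killed by the representation via D₂), one has Σ [D₂, f_i]·[D₂, g_i] = 0 and moreover Σ [D₂, f_i] ⊗_A [D₂, g_i] = 0 in the balanced tensor product; i.e., the (2,2)-component of junk tensors vanishes. -/
import Mathlib


/-- Same setting as the previous statement, with additionally `[D₂, η_χ] = 0`.
For a universal one-form `w = Σ fᵢ ⊗ gᵢ` killed by the representation via `D₂`
(`Σ fᵢ [D₂, gᵢ] = 0`), one has `Σ [D₂,fᵢ]·[D₂,gᵢ] = 0`, and moreover the junk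
tensor `Σ [D₂,fᵢ] ⊗_A [D₂,gᵢ]` vanishes: since the one-forms form a free
rank-one module on `η_χ` with `η_χ·b = ᾱ(b)·η_χ`, this balanced tensor equals
`(Σ (ᾱ−1)(fᵢ)·ᾱ((ᾱ−1)(gᵢ))) · η_χ ⊗ η_χ`, so its vanishing is expressed by the
vanishing of the coefficient in `A`. -/
theorem stmt7 {A B : Type*} [CommRing A] [Ring B]
    (alpha : A →+* A) (halpha : ∀ a, alpha (alpha a) = a)
    (iota : A →+* B) (eta D₂ : B)
    (hswap : ∀ a : A, iota a * eta = eta * iota (alpha a))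
    (hcomm : ∀ a : A, D₂ * iota a - iota a * D₂ = (iota (alpha a) - iota a) * eta)
    (hfree : ∀ a : A, iota a * eta = 0 → a = 0)
    (hetaD : D₂ * eta = eta * D₂)
    {ι : Type*} (s : Finset ι) (f g : ι → A)
    (hker : ∑ i ∈ s, iota (f i) * (D₂ * iota (g i) - iota (g i) * D₂) = 0) :
    (∑ i ∈ s, (D₂ * iota (f i) - iota (f i) * D₂) * (D₂ * iota (g i) - iota (g i) * D₂) = 0) ∧
    (∑ i ∈ s, (alpha (f i) - f i) * alpha (alpha (g i) - g i) = 0) := by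

  -- The coefficient `c = Σ fᵢ (α gᵢ − gᵢ)` vanishes by freeness.
  have hc : (∑ i ∈ s, f i * (alpha (g i) - g i)) = 0 := by
    apply hfree
    have h : iota (∑ i ∈ s, f i * (alpha (g i) - g i)) * eta
        = ∑ i ∈ s, iota (f i) * (D₂ * iota (g i) - iota (g i) * D₂) := by
      rw [map_sum, Finset.sum_mul]
      refine Finset.sum_congr rfl fun i _ => ?_
      rw [hcomm, map_mul, map_sub, mul_assoc]
    rw [h, hker]
  have hac : (∑ i ∈ s, alpha (f i) * (g i - alpha (g i))) = 0 := by
    have h : alpha (∑ i ∈ s, f i * (alpha (g i) - g i)) = 0 := by rw [hc, map_zero]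
    rw [map_sum] at h
    simpa only [map_mul, map_sub, halpha] using h
  have hS : (∑ i ∈ s, (alpha (f i) - f i) * alpha (alpha (g i) - g i)) = 0 := by
    have key : ∀ i ∈ s, (alpha (f i) - f i) * alpha (alpha (g i) - g i)
        = alpha (f i) * (g i - alpha (g i)) + f i * (alpha (g i) - g i) := by
      intro i _
      rw [map_sub, halpha]; ring
    rw [Finset.sum_congr rfl key, Finset.sum_add_distrib, hac, hc, add_zero]
  refine ⟨?_, hS⟩
  have hterm : ∀ i ∈ s, (D₂ * iota (f i) - iota (f i) * D₂) * (D₂ * iota (g i) - iota (g i) * D₂)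
      = iota ((alpha (f i) - f i) * alpha (alpha (g i) - g i)) * (eta * eta) := by
    intro i _
    have h1 : eta * iota (alpha (g i)) = iota (g i) * eta := (hswap (g i)).symm
    have h2 : eta * iota (g i) = iota (alpha (g i)) * eta := by
      have := hswap (alpha (g i)); rw [halpha] at this; exact this.symm
    have h3 : eta * (iota (alpha (g i)) - iota (g i))
        = (iota (g i) - iota (alpha (g i))) * eta := by
      rw [mul_sub, sub_mul, h1, h2]
    rw [hcomm, hcomm]
    calc (iota (alpha (f i)) - iota (f i)) * eta * ((iota (alpha (g i)) - iota (g i)) * eta)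
        = (iota (alpha (f i)) - iota (f i)) * (eta * (iota (alpha (g i)) - iota (g i))) * eta := by
          noncomm_ring
      _ = (iota (alpha (f i)) - iota (f i)) * ((iota (g i) - iota (alpha (g i))) * eta) * eta := by
          rw [h3]
      _ = iota ((alpha (f i) - f i) * alpha (alpha (g i) - g i)) * (eta * eta) := by
          simp only [map_mul, map_sub, halpha]
          noncomm_ring
  rw [Finset.sum_congr rfl hterm, ← Finset.sum_mul, ← map_sum, hS, map_zero, zero_mul]
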